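/- (Uniform target sampling, joint distance counts.) Fix n ≥ 1, a bit string k : Fin n → Bool, and naturals d₁, d₂, t, x₁, x₂ with 1 ≤ d₁ ≤ n, 1 ≤ d₂ ≤ n, d₁ ≠ d₂, and x₁ + x₂ < t. Then the number of finite sets T of bit strings (Fin n → Bool) with |T| = t, k ∈ T, |{z ∈ T | hammingDist z k = d₁}| = x₁, and |{z ∈ T | hammingDist z k = d₂}| = x₂ equals (n.choose d₁).choose x₁ * (n.choose d₂).choose x₂ * (2^n − 1 − n.choose d₁ − n.choose d₂).choose (t − 1 − x₁ − x₂). -/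

import Mathlib

open Finset

lemma sphere_card (n d : ℕ) (k : Fin n → Bool) :
    ((Finset.univ : Finset (Fin n → Bool)).filter (fun z => hammingDist z k = d)).card
      = n.choose d := by
  trans ((Finset.univ : Finset (Fin n)).powersetCard d).card
  swap
  · rw [Finset.card_powersetCard, Finset.card_univ, Fintype.card_fin]
  apply Finset.card_nbij' (i := fun z => Finset.univ.filter fun i => z i ≠ k i)
    (j := fun s i => if i ∈ s then !(k i) else k i)
  · intro z hz
    simp only [Finset.mem_coe, mem_filter, mem_univ, true_and] at hz
    rw [Finset.mem_coe, Finset.mem_powersetCard]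
    exact ⟨Finset.subset_univ _, hz⟩
  · intro s hs
    rw [Finset.mem_coe, Finset.mem_powersetCard] at hs
    simp only [Finset.mem_coe, mem_filter, mem_univ, true_and]
    rw [← hs.2, hammingDist]
    congr 1
    ext i
    by_cases h : i ∈ s <;> simp [h]
  · intro z hz
    funext i
    by_cases h : z i = k i
    · simp [h]
    · beta_reduce
      rw [if_pos (by simp [h])]
      revert h
      cases z i <;> cases k i <;> simp
  · intro s hs
    ext i
    by_cases h : i ∈ s <;> simp [h]

theorem uniform_sampling_joint_count (n : ℕ) (hn : 1 ≤ n) (k : Fin n → Bool)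
    (d₁ d₂ t x₁ x₂ : ℕ) (hd₁ : 1 ≤ d₁) (hd₁n : d₁ ≤ n) (hd₂ : 1 ≤ d₂) (hd₂n : d₂ ≤ n)
    (hne : d₁ ≠ d₂) (hx : x₁ + x₂ < t) :
    (Finset.univ.filter (fun T : Finset (Fin n → Bool) =>
        T.card = t ∧ k ∈ T ∧
        (T.filter (fun z => hammingDist z k = d₁)).card = x₁ ∧
        (T.filter (fun z => hammingDist z k = d₂)).card = x₂)).card =
      (n.choose d₁).choose x₁ * (n.choose d₂).choose x₂ *
        (2 ^ n - 1 - n.choose d₁ - n.choose d₂).choose (t - 1 - x₁ - x₂) := by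
  classical
  have hS1card := sphere_card n d₁ k
  have hS2card := sphere_card n d₂ k
  set S₁ := (Finset.univ : Finset (Fin n → Bool)).filter (fun z => hammingDist z k = d₁)
    with hS₁def
  set S₂ := (Finset.univ : Finset (Fin n → Bool)).filter (fun z => hammingDist z k = d₂)
    with hS₂def
  set R := ((Finset.univ \ S₁) \ S₂).erase k with hRdef
  have mem1 : ∀ z, z ∈ S₁ ↔ hammingDist z k = d₁ := by intro z; simp [hS₁def]
  have mem2 : ∀ z, z ∈ S₂ ↔ hammingDist z k = d₂ := by intro z; simp [hS₂def]
  have memR : ∀ z, z ∈ R ↔ (z ≠ k ∧ hammingDist z k ≠ d₁ ∧ hammingDist z k ≠ d₂) := by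
    intro z
    simp only [hRdef, Finset.mem_erase, Finset.mem_sdiff, Finset.mem_univ, true_and,
      mem1, mem2]
    try tauto
  have hk1 : k ∉ S₁ := by rw [mem1, hammingDist_self]; omega
  have hk2 : k ∉ S₂ := by rw [mem2, hammingDist_self]; omega
  have hkR : k ∉ R := by rw [memR]; simp
  have hd12 : Disjoint S₁ S₂ := by
    rw [Finset.disjoint_left]
    intro z h1 h2
    rw [mem1] at h1; rw [mem2] at h2; omega
  have hd1R : Disjoint S₁ R := by
    rw [Finset.disjoint_left]
    intro z h1 h2
    rw [mem1] at h1; rw [memR] at h2; exact h2.2.1 h1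
  have hd2R : Disjoint S₂ R := by
    rw [Finset.disjoint_left]
    intro z h1 h2
    rw [mem2] at h1; rw [memR] at h2; exact h2.2.2 h1
  have hcR : R.card = 2 ^ n - 1 - n.choose d₁ - n.choose d₂ := by
    have h2 : S₂ ⊆ Finset.univ \ S₁ := by
      intro z hz
      rw [Finset.mem_sdiff]
      refine ⟨Finset.mem_univ _, ?_⟩
      rw [mem1]; rw [mem2] at hz; omega
    have hkmem : k ∈ (Finset.univ \ S₁) \ S₂ := by
      rw [Finset.mem_sdiff, Finset.mem_sdiff]
      exact ⟨⟨Finset.mem_univ _, hk1⟩, hk2⟩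
    have huniv : (Finset.univ : Finset (Fin n → Bool)).card = 2 ^ n := by
      simp [Finset.card_univ]
    rw [hRdef, Finset.card_erase_of_mem hkmem, Finset.card_sdiff_of_subset h2,
      Finset.card_sdiff_of_subset (Finset.subset_univ _), huniv, hS1card, hS2card]
    omega
  have inter1 : ∀ T : Finset (Fin n → Bool),
      T ∩ S₁ = T.filter (fun z => hammingDist z k = d₁) := by
    intro T; ext z
    simp only [Finset.mem_inter, Finset.mem_filter, mem1]
  have inter2 : ∀ T : Finset (Fin n → Bool),
      T ∩ S₂ = T.filter (fun z => hammingDist z k = d₂) := by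
    intro T; ext z
    simp only [Finset.mem_inter, Finset.mem_filter, mem2]
  have hdecomp : ∀ T : Finset (Fin n → Bool), k ∈ T →
      insert k ((T ∩ S₁) ∪ (T ∩ S₂) ∪ (T ∩ R)) = T := by
    intro T hkT
    ext z
    simp only [Finset.mem_insert, Finset.mem_union, Finset.mem_inter]
    constructor
    · rintro (rfl | (⟨hz, _⟩ | ⟨hz, _⟩) | ⟨hz, _⟩)
      · exact hkT
      all_goals exact hz
    · intro hz
      by_cases hzk : z = k
      · exact Or.inl hzk
      right
      by_cases h1 : hammingDist z k = d₁
      · exact Or.inl (Or.inl ⟨hz, (mem1 z).2 h1⟩)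
      by_cases h2 : hammingDist z k = d₂
      · exact Or.inl (Or.inr ⟨hz, (mem2 z).2 h2⟩)
      · exact Or.inr ⟨hz, (memR z).2 ⟨hzk, h1, h2⟩⟩
  have key : (Finset.univ.filter (fun T : Finset (Fin n → Bool) =>
        T.card = t ∧ k ∈ T ∧
        (T.filter (fun z => hammingDist z k = d₁)).card = x₁ ∧
        (T.filter (fun z => hammingDist z k = d₂)).card = x₂)).card =
      ((S₁.powersetCard x₁) ×ˢ ((S₂.powersetCard x₂) ×ˢ
        (R.powersetCard (t - 1 - x₁ - x₂)))).card := by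
    apply Finset.card_nbij' (i := fun T => (T ∩ S₁, T ∩ S₂, T ∩ R))
      (j := fun p => insert k (p.1 ∪ p.2.1 ∪ p.2.2))
    · intro T hT
      simp only [Finset.mem_coe, Finset.mem_filter, Finset.mem_univ, true_and] at hT
      obtain ⟨ht, hkT, h1, h2⟩ := hT
      have hc1 : (T ∩ S₁).card = x₁ := by rw [inter1]; exact h1
      have hc2 : (T ∩ S₂).card = x₂ := by rw [inter2]; exact h2
      have hcardT : t = 1 + x₁ + x₂ + (T ∩ R).card := by
        rw [← ht]
        conv_lhs => rw [← hdecomp T hkT]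
        rw [Finset.card_insert_of_notMem, Finset.card_union_of_disjoint,
          Finset.card_union_of_disjoint, hc1, hc2]
        · ring
        · exact hd12.mono Finset.inter_subset_right Finset.inter_subset_right
        · rw [Finset.disjoint_union_left]
          exact ⟨hd1R.mono Finset.inter_subset_right Finset.inter_subset_right,
            hd2R.mono Finset.inter_subset_right Finset.inter_subset_right⟩
        · simp only [Finset.mem_union, Finset.mem_inter, not_or]
          exact ⟨⟨fun h => hk1 h.2, fun h => hk2 h.2⟩, fun h => hkR h.2⟩
      simp only [Finset.mem_coe, Finset.mem_product, Finset.mem_powersetCard]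
      refine ⟨⟨Finset.inter_subset_right, hc1⟩, ⟨Finset.inter_subset_right, hc2⟩,
        Finset.inter_subset_right, ?_⟩
      omega
    · rintro ⟨A, B, C⟩ hp
      simp only [Finset.mem_coe, Finset.mem_product, Finset.mem_powersetCard] at hp
      obtain ⟨⟨hA, hAc⟩, ⟨hB, hBc⟩, hC, hCc⟩ := hp
      have hkU : k ∉ A ∪ B ∪ C := by
        simp only [Finset.mem_union, not_or]
        exact ⟨⟨fun h => hk1 (hA h), fun h => hk2 (hB h)⟩, fun h => hkR (hC h)⟩
      have hf1 : (insert k (A ∪ B ∪ C)).filter (fun z => hammingDist z k = d₁) = A := by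
        ext z
        simp only [Finset.mem_filter, Finset.mem_insert, Finset.mem_union]
        constructor
        · rintro ⟨rfl | (hz | hz) | hz, hd⟩
          · rw [hammingDist_self] at hd; omega
          · exact hz
          · have := (mem2 z).1 (hB hz); omega
          · exact absurd hd ((memR z).1 (hC hz)).2.1
        · intro hz
          exact ⟨Or.inr (Or.inl (Or.inl hz)), (mem1 z).1 (hA hz)⟩
      have hf2 : (insert k (A ∪ B ∪ C)).filter (fun z => hammingDist z k = d₂) = B := by
        ext z
        simp only [Finset.mem_filter, Finset.mem_insert, Finset.mem_union]
        constructor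
        · rintro ⟨rfl | (hz | hz) | hz, hd⟩
          · rw [hammingDist_self] at hd; omega
          · have := (mem1 z).1 (hA hz); omega
          · exact hz
          · exact absurd hd ((memR z).1 (hC hz)).2.2
        · intro hz
          exact ⟨Or.inr (Or.inl (Or.inr hz)), (mem2 z).1 (hB hz)⟩
      simp only [Finset.mem_coe, Finset.mem_filter, Finset.mem_univ, true_and]
      refine ⟨?_, Finset.mem_insert_self _ _, by rw [hf1, hAc], by rw [hf2, hBc]⟩
      rw [Finset.card_insert_of_notMem hkU, Finset.card_union_of_disjoint,
        Finset.card_union_of_disjoint, hAc, hBc, hCc]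
      · omega
      · exact hd12.mono hA hB
      · rw [Finset.disjoint_union_left]
        exact ⟨hd1R.mono hA hC, hd2R.mono hB hC⟩
    · intro T hT
      simp only [Finset.mem_coe, Finset.mem_filter, Finset.mem_univ, true_and] at hT
      exact hdecomp T hT.2.1
    · rintro ⟨A, B, C⟩ hp
      simp only [Finset.mem_coe, Finset.mem_product, Finset.mem_powersetCard] at hp
      obtain ⟨⟨hA, hAc⟩, ⟨hB, hBc⟩, hC, hCc⟩ := hp
      have huA : insert k (A ∪ B ∪ C) ∩ S₁ = A := by
        ext z
        simp only [Finset.mem_inter, Finset.mem_insert, Finset.mem_union]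
        constructor
        · rintro ⟨rfl | (hz | hz) | hz, hS⟩
          · exact absurd hS hk1
          · exact hz
          · exact absurd hS (Finset.disjoint_left.1 hd12.symm (hB hz))
          · exact absurd hS (Finset.disjoint_left.1 hd1R.symm (hC hz))
        · intro hz
          exact ⟨Or.inr (Or.inl (Or.inl hz)), hA hz⟩
      have huB : insert k (A ∪ B ∪ C) ∩ S₂ = B := by
        ext z
        simp only [Finset.mem_inter, Finset.mem_insert, Finset.mem_union]
        constructor
        · rintro ⟨rfl | (hz | hz) | hz, hS⟩
          · exact absurd hS hk2
          · exact absurd hS (Finset.disjoint_left.1 hd12 (hA hz))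
          · exact hz
          · exact absurd hS (Finset.disjoint_left.1 hd2R.symm (hC hz))
        · intro hz
          exact ⟨Or.inr (Or.inl (Or.inr hz)), hB hz⟩
      have huC : insert k (A ∪ B ∪ C) ∩ R = C := by
        ext z
        simp only [Finset.mem_inter, Finset.mem_insert, Finset.mem_union]
        constructor
        · rintro ⟨rfl | (hz | hz) | hz, hS⟩
          · exact absurd hS hkR
          · exact absurd hS (Finset.disjoint_left.1 hd1R (hA hz))
          · exact absurd hS (Finset.disjoint_left.1 hd2R (hB hz))
          · exact hz
        · intro hz
          exact ⟨Or.inr (Or.inr hz), hC hz⟩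
      simp only [huA, huB, huC]
  rw [key, Finset.card_product, Finset.card_product, Finset.card_powersetCard,
    Finset.card_powersetCard, Finset.card_powersetCard, hS1card, hS2card, hcR]
  ring
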